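/- For nonnegative integers k, r, t, x with t ≤ r, the identity C_q(x,t)·C_q(k−x, r−t) = ∑_{i=t}^{r} (−1)^{i−t} q^{−(r−t)(x−t)+binom(i−t,2)} C_q(i,t) C_q(k−i, r−i) C_q(x,i) holds. -/

import Mathlib

noncomputable def gbinom (q : ℝ) (a k : ℤ) : ℝ :=
  if k < 0 then 0
  else ∏ i ∈ Finset.range k.toNat, (q ^ (a - k + i + 1) - 1) / (q ^ ((i : ℤ) + 1) - 1)

section
variable (q : ℝ) (hq : 1 < q)

lemma gb_zero (a : ℤ) : gbinom q a 0 = 1 := by simp [gbinom]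

lemma gb_neg (a k : ℤ) (h : k < 0) : gbinom q a k = 0 := by simp [gbinom, h]

lemma gb_nat (a : ℤ) (k : ℕ) :
    gbinom q a k = ∏ i ∈ Finset.range k, (q ^ (a - k + i + 1) - 1) / (q ^ ((i : ℤ) + 1) - 1) := by
  simp [gbinom]

end
section
variable {q : ℝ}

lemma q_pos (hq : 1 < q) : (0:ℝ) < q := lt_trans one_pos hq
lemma q_ne (hq : 1 < q) : q ≠ 0 := ne_of_gt (q_pos hq)

lemma qpow_ne_one (hq : 1 < q) {m : ℤ} (hm : m ≠ 0) : q ^ m ≠ 1 := by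
  have : StrictMono fun n : ℤ => q ^ n := zpow_right_strictMono₀ hq
  intro h
  exact hm (this.injective (by simpa using h))

lemma qpow_pos (hq : 1 < q) (m : ℤ) : (0:ℝ) < q ^ m := zpow_pos (q_pos hq) m

lemma qden_ne (hq : 1 < q) (j : ℕ) : q ^ ((j:ℤ) + 1) - 1 ≠ 0 :=
  sub_ne_zero.2 (qpow_ne_one hq (by omega : ((j:ℤ)+1) ≠ 0))

end
section
variable {q : ℝ}

lemma gb_nat_lt (a b : ℕ) (h : a < b) : gbinom q (a:ℤ) (b:ℤ) = 0 := by
  rw [gb_nat]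
  apply Finset.prod_eq_zero (i := b - 1 - a)
  · simp only [Finset.mem_range]; omega
  · have : (a:ℤ) - b + (b - 1 - a : ℕ) + 1 = 0 := by push_cast [h.le]; omega
    rw [this]
    simp

lemma gb_A1 (a : ℤ) (k : ℕ) :
    gbinom q a (k+1 : ℕ) = gbinom q (a-1) k * ((q ^ a - 1) / (q ^ ((k:ℤ)+1) - 1)) := by
  rw [gb_nat, gb_nat, Finset.prod_range_succ]
  congr 1
  · apply Finset.prod_congr rfl
    intro i _
    congr 2
    push_cast; ring
  · congr 2
    push_cast; ring

lemma prod_shift (q : ℝ) (c : ℤ) (k : ℕ) :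
    (q ^ c - 1) * ∏ i ∈ Finset.range (k+1), (q ^ (c + i + 1) - 1)
      = (∏ i ∈ Finset.range (k+1), (q ^ (c + i) - 1)) * (q ^ (c + (k+1)) - 1) := by
  have h1 := Finset.prod_range_succ' (fun i : ℕ => q ^ (c + i) - 1) (k+1)
  have h2 := Finset.prod_range_succ (fun i : ℕ => q ^ (c + i) - 1) (k+1)
  try simp only at h1 h2
  rw [show (∏ i ∈ Finset.range (k+1), (q ^ (c + i + 1) - 1))
      = ∏ i ∈ Finset.range (k+1), (q ^ (c + (i+1:ℕ)) - 1) from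
    Finset.prod_congr rfl fun i _ => by push_cast; ring_nf]
  rw [show (q ^ (c + ((k:ℤ)+1)) - 1) = q ^ (c + ((k+1:ℕ):ℤ)) - 1 from by push_cast; ring_nf]
  push_cast at h1 h2 ⊢
  simp only [add_zero] at h1
  rw [mul_comm] at h1
  rw [← h1, h2]

lemma gb_A2 (a : ℤ) (k : ℕ) :
    gbinom q a (k+1 : ℕ) * (q ^ (a - (k+1)) - 1) = gbinom q (a-1) (k+1 : ℕ) * (q ^ a - 1) := by
  rw [gb_nat, gb_nat, Finset.prod_div_distrib, Finset.prod_div_distrib,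
    div_mul_eq_mul_div, div_mul_eq_mul_div]
  congr 1
  have hs := prod_shift q (a - ((k:ℤ)+1)) k
  rw [show (∏ i ∈ Finset.range (k+1), (q ^ (a - (k+1:ℕ) + i + 1) - 1))
      = ∏ i ∈ Finset.range (k+1), (q ^ ((a - ((k:ℤ)+1)) + i + 1) - 1) from
    Finset.prod_congr rfl fun i _ => by push_cast; ring_nf]
  rw [show (∏ i ∈ Finset.range (k+1), (q ^ (a - 1 - (k+1:ℕ) + i + 1) - 1))
      = ∏ i ∈ Finset.range (k+1), (q ^ ((a - ((k:ℤ)+1)) + i) - 1) from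
    Finset.prod_congr rfl fun i _ => by push_cast; ring_nf]
  rw [show q ^ (a - ((k:ℤ)+1)) - 1 = q ^ (a - ((k:ℤ)+1)) - 1 from rfl]
  rw [show (q ^ a - 1) = q ^ ((a - ((k:ℤ)+1)) + ((k:ℤ)+1)) - 1 from by rw [show (a - ((k:ℤ)+1)) + ((k:ℤ)+1) = a from by ring]]
  linarith [hs]

end
section
variable {q : ℝ}

lemma gb_cneg (hq : 1 < q) (k : ℕ) :
    gbinom q (-1) (k+1 : ℕ) = -q ^ (-((k:ℤ)+1)) * gbinom q (-1) k := by
  rw [gb_nat, gb_nat, Finset.prod_div_distrib, Finset.prod_div_distrib]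
  have hn : (∏ i ∈ Finset.range (k+1), (q ^ ((-1:ℤ) - ((k+1:ℕ):ℤ) + (i:ℤ) + 1) - 1))
      = (q ^ (-((k:ℤ)+1)) - 1) * ∏ i ∈ Finset.range k, (q ^ ((-1:ℤ) - ((k:ℕ):ℤ) + (i:ℤ) + 1) - 1) := by
    have h1 := Finset.prod_range_succ' (fun i : ℕ => q ^ (-((k:ℤ)+1) + i) - 1) k
    simp only [Nat.cast_zero, add_zero] at h1
    rw [show (∏ i ∈ Finset.range (k+1), (q ^ ((-1:ℤ) - ((k+1:ℕ):ℤ) + (i:ℤ) + 1) - 1))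
        = ∏ i ∈ Finset.range (k+1), (q ^ (-((k:ℤ)+1) + (i:ℤ)) - 1) from
      Finset.prod_congr rfl fun i _ => by push_cast; ring_nf]
    rw [show (∏ i ∈ Finset.range k, (q ^ ((-1:ℤ) - ((k:ℕ):ℤ) + (i:ℤ) + 1) - 1))
        = ∏ i ∈ Finset.range k, (q ^ (-((k:ℤ)+1) + ((i+1:ℕ):ℤ)) - 1) from
      Finset.prod_congr rfl fun i _ => by push_cast; ring_nf]
    rw [h1, mul_comm]
  have hd : (∏ i ∈ Finset.range (k+1), (q ^ ((i:ℤ)+1) - 1))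
      = (∏ i ∈ Finset.range k, (q ^ ((i:ℤ)+1) - 1)) * (q ^ ((k:ℤ)+1) - 1) := by
    rw [Finset.prod_range_succ]
  rw [hn, hd]
  have hfac : (q ^ (-((k:ℤ)+1)) - 1) = -q ^ (-((k:ℤ)+1)) * (q ^ ((k:ℤ)+1) - 1) := by
    have h : q ^ (-((k:ℤ)+1)) * q ^ ((k:ℤ)+1) = 1 := by
      rw [← zpow_add₀ (q_ne hq), show (-((k:ℤ)+1)) + ((k:ℤ)+1) = 0 from by ring, zpow_zero]
    linear_combination h
  rw [hfac]
  have h2 : q ^ ((k:ℤ)+1) - 1 ≠ 0 := qden_ne hq k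
  have gen : ∀ N D : ℝ, (-q ^ (-((k:ℤ)+1)) * (q ^ ((k:ℤ)+1) - 1) * N) / (D * (q ^ ((k:ℤ)+1) - 1))
      = -q ^ (-((k:ℤ)+1)) * (N / D) := by
    intro N D
    rw [show -q ^ (-((k:ℤ)+1)) * (q ^ ((k:ℤ)+1) - 1) * N = (-q ^ (-((k:ℤ)+1)) * N) * (q ^ ((k:ℤ)+1) - 1) from by ring,
      mul_div_mul_right _ _ h2, mul_div_assoc]
  exact gen _ _

lemma gb_pascal2 (hq : 1 < q) (a : ℤ) (k : ℕ) :
    gbinom q a (k+1 : ℕ) = gbinom q (a-1) k + q ^ ((k:ℤ)+1) * gbinom q (a-1) (k+1 : ℕ) := by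
  by_cases ha : a = 0
  · subst ha
    have h0 : gbinom q 0 ((k+1:ℕ):ℤ) = 0 := by
      have := gb_nat_lt (q := q) 0 (k+1) (by omega)
      simpa using this
    rw [show ((0:ℤ))-1 = -1 by ring, h0, gb_cneg hq k]
    have h : q ^ ((k:ℤ)+1) * q ^ (-((k:ℤ)+1)) = 1 := by
      rw [← zpow_add₀ (q_ne hq), show ((k:ℤ)+1) + (-((k:ℤ)+1)) = 0 from by ring, zpow_zero]
    linear_combination gbinom q (-1) (k:ℤ) * h
  · have hA1 := gb_A1 (q := q) a k
    have hA1' : gbinom q a (k+1:ℕ) * (q ^ ((k:ℤ)+1) - 1) = gbinom q (a-1) k * (q ^ a - 1) := by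
      rw [hA1, mul_assoc, div_mul_cancel₀ _ (qden_ne hq k)]
    have hA2 := gb_A2 (q := q) a k
    have hz : q ^ (a - ((k:ℤ)+1)) * q ^ ((k:ℤ)+1) = q ^ a := by
      rw [← zpow_add₀ (q_ne hq)]; congr 1; ring
    have hne : q ^ a - 1 ≠ 0 := sub_ne_zero.2 (qpow_ne_one hq ha)
    apply mul_right_cancel₀ hne
    have hA2' : gbinom q a (k+1:ℕ) * (q ^ (a - ((k:ℤ)+1)) - 1) = gbinom q (a-1) (k+1:ℕ) * (q ^ a - 1) := hA2
    linear_combination hA1' + q ^ ((k:ℤ)+1) * hA2' - gbinom q a ((k+1:ℕ):ℤ) * hz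

lemma gb_pascal1 (hq : 1 < q) (a : ℤ) (ha : a ≠ 0) (k : ℕ) :
    gbinom q a (k+1 : ℕ) = gbinom q (a-1) (k+1 : ℕ) + q ^ (a-((k:ℤ)+1)) * gbinom q (a-1) k := by
  have hA1 := gb_A1 (q := q) a k
  have hA1' : gbinom q a (k+1:ℕ) * (q ^ ((k:ℤ)+1) - 1) = gbinom q (a-1) k * (q ^ a - 1) := by
    rw [hA1, mul_assoc, div_mul_cancel₀ _ (qden_ne hq k)]
  have hA2 := gb_A2 (q := q) a k
  have hA2' : gbinom q a (k+1:ℕ) * (q ^ (a - ((k:ℤ)+1)) - 1) = gbinom q (a-1) (k+1:ℕ) * (q ^ a - 1) := hA2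
  have hz : q ^ (a - ((k:ℤ)+1)) * q ^ ((k:ℤ)+1) = q ^ a := by
    rw [← zpow_add₀ (q_ne hq)]; congr 1; ring
  have hne : q ^ a - 1 ≠ 0 := sub_ne_zero.2 (qpow_ne_one hq ha)
  apply mul_right_cancel₀ hne
  linear_combination hA2' + q ^ (a-((k:ℤ)+1)) * hA1' - gbinom q a ((k+1:ℕ):ℤ) * hz

end
noncomputable def qfac (q : ℝ) (n : ℕ) : ℝ := ∏ j ∈ Finset.range n, (q ^ ((j:ℤ)+1) - 1)

section
variable {q : ℝ}

lemma qfac_ne (hq : 1 < q) (n : ℕ) : qfac q n ≠ 0 := by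
  apply Finset.prod_ne_zero_iff.2
  intro j _
  exact qden_ne hq j

lemma gb_fact (hq : 1 < q) (n k : ℕ) (h : k ≤ n) :
    gbinom q n k = qfac q n / (qfac q k * qfac q (n-k)) := by
  rw [gb_nat, Finset.prod_div_distrib]
  have hnum : (∏ i ∈ Finset.range k, (q ^ ((n:ℤ) - (k:ℕ) + i + 1) - 1)) * qfac q (n-k) = qfac q n := by
    have := Finset.prod_range_add (fun j : ℕ => q ^ ((j:ℤ)+1) - 1) (n-k) k
    rw [show n - k + k = n from by omega] at this
    unfold qfac
    rw [this]
    rw [show (∏ i ∈ Finset.range k, (q ^ ((n:ℤ) - (k:ℕ) + i + 1) - 1))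
        = ∏ i ∈ Finset.range k, (q ^ (((n-k+i:ℕ):ℤ)+1) - 1) from
      Finset.prod_congr rfl fun i _ => by push_cast [h]; ring_nf]
    ring
  have h2 : (∏ i ∈ Finset.range k, (q ^ ((i:ℤ)+1) - 1)) = qfac q k := rfl
  rw [h2]
  rw [show (∏ i ∈ Finset.range k, (q ^ ((n:ℤ) - (k:ℕ) + i + 1) - 1)) = qfac q n / qfac q (n-k) from by
    rw [eq_div_iff (qfac_ne hq (n-k))]; exact hnum]
  rw [div_div, mul_comm (qfac q (n-k)) (qfac q k)]

lemma gb_tri (hq : 1 < q) (x i t : ℕ) (hti : t ≤ i) :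
    gbinom q x i * gbinom q i t = gbinom q x t * gbinom q ((x:ℤ)-t) ((i:ℤ)-t) := by
  by_cases hix : i ≤ x
  · have htx : t ≤ x := le_trans hti hix
    rw [show (x:ℤ) - t = ((x-t:ℕ):ℤ) from by push_cast [htx]; ring,
       show (i:ℤ) - t = ((i-t:ℕ):ℤ) from by push_cast [hti]; ring]
    rw [gb_fact hq x i hix, gb_fact hq i t hti, gb_fact hq x t htx,
       gb_fact hq (x-t) (i-t) (by omega)]
    rw [show x - t - (i - t) = x - i from by omega]
    have hne := fun m => qfac_ne (q := q) hq m
    field_simp [hne i, hne t, hne (x-i), hne (i-t), hne (x-t), hne x]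
  · push_neg at hix
    rw [gb_nat_lt x i hix]
    by_cases htx : t ≤ x
    · rw [show (x:ℤ) - t = ((x-t:ℕ):ℤ) from by push_cast [htx]; ring,
         show (i:ℤ) - t = ((i-t:ℕ):ℤ) from by push_cast [hti]; ring,
         gb_nat_lt (x-t) (i-t) (by omega)]
      ring
    · push_neg at htx
      rw [gb_nat_lt x t htx]
      ring

end
section
variable {q : ℝ}

lemma gb_key (hq : 1 < q) (y : ℕ) : ∀ (m : ℕ) (n : ℤ),
    (∑ j ∈ Finset.range (m+1),
      (-1:ℝ)^j * q ^ ((j.choose 2 : ℕ) : ℤ) * gbinom q (y:ℤ) (j:ℤ) * gbinom q (n - j) ((m:ℤ) - j))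
    = q ^ (((m*y : ℕ) : ℤ)) * gbinom q (n - y) (m:ℤ) := by
  induction y with
  | zero =>
    intro m n
    rw [Finset.sum_eq_single 0]
    · simp [gb_zero]
    · intro b hb hb0
      have h0 : gbinom q ((0:ℕ):ℤ) (b:ℤ) = 0 := gb_nat_lt 0 b (by omega)
      rw [h0]; ring
    · intro h; exact absurd (Finset.mem_range.2 (by omega)) h
  | succ y ih =>
    intro m n
    match m with
    | 0 =>
      rw [Finset.sum_range_one]
      simp [gb_zero]
    | (m'+1) =>
      have hps : ∀ j : ℕ, gbinom q ((y+1:ℕ):ℤ) (j:ℤ)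
          = gbinom q (y:ℤ) (j:ℤ) + q ^ (((y:ℤ)+1) - j) * gbinom q (y:ℤ) ((j:ℤ)-1) := by
        intro j
        match j with
        | 0 =>
          rw [show ((0:ℕ):ℤ) = (0:ℤ) from rfl, gb_zero, gb_zero,
            gb_neg q (y:ℤ) ((0:ℤ)-1) (by omega)]
          ring
        | (j'+1) =>
          have hp := gb_pascal1 hq ((y:ℤ)+1) (by positivity) j'
          rw [show (y:ℤ)+1-1 = (y:ℤ) from by ring] at hp
          rw [show ((y+1:ℕ):ℤ) = (y:ℤ)+1 from by push_cast; ring,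
            show ((j'+1:ℕ):ℤ) = ((j'+1:ℕ):ℤ) from rfl]
          rw [hp]
          rw [show ((j'+1:ℕ):ℤ) - 1 = (j':ℤ) from by push_cast; ring,
            show (((j'+1:ℕ)):ℤ) = (j':ℤ)+1 from by push_cast; ring]
      have expand : ∀ j ∈ Finset.range ((m'+1)+1),
          (-1:ℝ)^j * q ^ ((j.choose 2 : ℕ) : ℤ) * gbinom q ((y+1:ℕ):ℤ) (j:ℤ) * gbinom q (n - j) (((m'+1:ℕ):ℤ) - j)
          = (-1:ℝ)^j * q ^ ((j.choose 2 : ℕ) : ℤ) * gbinom q (y:ℤ) (j:ℤ) * gbinom q (n - j) (((m'+1:ℕ):ℤ) - j)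
            + (-1:ℝ)^j * q ^ ((j.choose 2 : ℕ) : ℤ) * q ^ (((y:ℤ)+1) - j) * gbinom q (y:ℤ) ((j:ℤ)-1) * gbinom q (n - j) (((m'+1:ℕ):ℤ) - j) := by
        intro j _
        rw [hps j]; ring
      rw [Finset.sum_congr rfl expand, Finset.sum_add_distrib, ih (m'+1) n]
      rw [Finset.sum_range_succ']
      have hzero : (-1:ℝ)^0 * q ^ (((0:ℕ).choose 2 : ℕ) : ℤ) * q ^ (((y:ℤ)+1) - (0:ℕ)) * gbinom q (y:ℤ) (((0:ℕ):ℤ)-1) * gbinom q (n - (0:ℕ)) (((m'+1:ℕ):ℤ) - (0:ℕ)) = 0 := by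
        rw [gb_neg q (y:ℤ) (((0:ℕ):ℤ)-1) (by simp)]
        ring
      rw [hzero, add_zero]
      have hshift : ∀ j ∈ Finset.range (m'+1),
          (-1:ℝ)^(j+1) * q ^ (((j+1).choose 2 : ℕ) : ℤ) * q ^ (((y:ℤ)+1) - ((j+1:ℕ):ℤ)) * gbinom q (y:ℤ) (((j+1:ℕ):ℤ)-1) * gbinom q (n - ((j+1:ℕ):ℤ)) (((m'+1:ℕ):ℤ) - ((j+1:ℕ):ℤ))
          = (-q ^ (y:ℤ)) * ((-1:ℝ)^j * q ^ ((j.choose 2 : ℕ) : ℤ) * gbinom q (y:ℤ) (j:ℤ) * gbinom q ((n-1) - j) ((m':ℤ) - j)) := by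
        intro j _
        rw [show ((j+1:ℕ):ℤ) - 1 = (j:ℤ) from by push_cast; ring]
        rw [show n - ((j+1:ℕ):ℤ) = (n-1) - j from by push_cast; ring]
        rw [show ((m'+1:ℕ):ℤ) - ((j+1:ℕ):ℤ) = (m':ℤ) - j from by push_cast; ring]
        rw [show (((j+1).choose 2 : ℕ) : ℤ) = ((j.choose 2 : ℕ) : ℤ) + j from by
          rw [Nat.choose_succ_succ]; push_cast [Nat.choose_one_right]; ring]
        rw [zpow_add₀ (q_ne hq) ((j.choose 2 : ℕ) : ℤ) (j:ℤ)]
        rw [show ((y:ℤ)+1) - ((j+1:ℕ):ℤ) = (y:ℤ) - j from by push_cast; ring]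
        rw [show (y:ℤ) - j = (y:ℤ) + (-(j:ℤ)) from by ring,
          zpow_add₀ (q_ne hq) (y:ℤ) (-(j:ℤ))]
        have hj : q ^ ((j:ℤ)) * q ^ (-(j:ℤ)) = 1 := by
          rw [← zpow_add₀ (q_ne hq), show (j:ℤ) + (-(j:ℤ)) = 0 from by ring, zpow_zero]
        have : (-1:ℝ)^(j+1) = -(-1:ℝ)^j := by ring
        rw [this]
        linear_combination (-(-1:ℝ)^j * q ^ ((j.choose 2 : ℕ) : ℤ) * q ^ ((y:ℤ)) * gbinom q (y:ℤ) (j:ℤ) * gbinom q ((n-1) - j) ((m':ℤ) - j)) * hj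
      rw [Finset.sum_congr rfl hshift, ← Finset.mul_sum]
      rw [ih m' (n-1)]
      rw [show n - 1 - (y:ℤ) = n - ((y+1:ℕ):ℤ) from by push_cast; ring]
      have hp2 := gb_pascal2 hq (n - y) m'
      rw [show n - y - 1 = n - (y+1:ℕ) from by push_cast; ring] at hp2
      rw [show ((m'+1:ℕ):ℤ) = (m':ℤ)+1 from by push_cast; ring] at hp2 ⊢
      rw [hp2]
      have e1 : q ^ ((((m'+1)*(y+1) : ℕ)) : ℤ) = q ^ ((((m'+1)*y : ℕ)) : ℤ) * q ^ ((m':ℤ)+1) := by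
        rw [show ((((m'+1)*(y+1) : ℕ)) : ℤ) = ((((m'+1)*y : ℕ)) : ℤ) + ((m':ℤ)+1) from by push_cast; ring,
          zpow_add₀ (q_ne hq)]
      have e2 : q ^ ((((m'+1)*y : ℕ)) : ℤ) = q ^ ((y:ℤ)) * q ^ (((m'*y : ℕ)) : ℤ) := by
        rw [show ((((m'+1)*y : ℕ)) : ℤ) = (y:ℤ) + ((m'*y : ℕ) : ℤ) from by push_cast; ring,
          zpow_add₀ (q_ne hq)]
      rw [e1, e2]
      ring
end
theorem stmt12 (q : ℝ) (hq : 1 < q) (k r t x : ℕ) (htr : t ≤ r) :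
    gbinom q x t * gbinom q ((k : ℤ) - x) ((r : ℤ) - t) =
      ∑ i ∈ Finset.Icc t r,
        (-1 : ℝ) ^ (i - t) *
          q ^ (-(((r : ℤ) - t) * ((x : ℤ) - t)) + ((i - t).choose 2 : ℤ)) *
          gbinom q i t * gbinom q ((k : ℤ) - i) ((r : ℤ) - i) * gbinom q x i := by
  by_cases htx : t ≤ x
  · rw [← Finset.Ico_add_one_right_eq_Icc, Finset.sum_Ico_eq_sum_range, show r + 1 - t = (r-t)+1 from by omega]
    have hterm : ∀ j ∈ Finset.range ((r-t)+1),
        (-1:ℝ)^(t+j-t) * q ^ (-(((r:ℤ)-t)*((x:ℤ)-t)) + (((t+j-t).choose 2 : ℕ) : ℤ)) *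
          gbinom q ((t+j:ℕ):ℤ) (t:ℤ) * gbinom q ((k:ℤ)-((t+j:ℕ):ℤ)) ((r:ℤ)-((t+j:ℕ):ℤ)) * gbinom q (x:ℤ) ((t+j:ℕ):ℤ)
        = (gbinom q (x:ℤ) (t:ℤ) * q ^ (-(((r-t)*(x-t) : ℕ) : ℤ))) *
            ((-1:ℝ)^j * q ^ ((j.choose 2 : ℕ):ℤ) * gbinom q ((x-t:ℕ):ℤ) (j:ℤ) *
              gbinom q (((k:ℤ)-t) - j) (((r-t:ℕ):ℤ) - j)) := by
      intro j hj
      rw [show t + j - t = j from by omega]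
      have htri := gb_tri hq x (t+j) t (by omega)
      rw [show ((t+j:ℕ):ℤ) - (t:ℤ) = (j:ℤ) from by push_cast; ring,
        show (x:ℤ) - (t:ℤ) = ((x-t:ℕ):ℤ) from by push_cast [htx]; ring] at htri
      rw [show -(((r:ℤ)-t)*((x:ℤ)-t)) + ((j.choose 2 : ℕ) : ℤ)
          = (-(((r-t)*(x-t) : ℕ) : ℤ)) + ((j.choose 2:ℕ):ℤ) from by push_cast [htr, htx]; ring,
        zpow_add₀ (q_ne hq)]
      rw [show (k:ℤ)-((t+j:ℕ):ℤ) = ((k:ℤ)-t)-j from by push_cast; ring,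
        show (r:ℤ)-((t+j:ℕ):ℤ) = ((r-t:ℕ):ℤ)-j from by push_cast [htr]; ring]
      linear_combination ((-1:ℝ)^j * q ^ (-(((r-t)*(x-t) : ℕ) : ℤ)) * q ^ ((j.choose 2 : ℕ):ℤ) *
        gbinom q (((k:ℤ)-t)-j) (((r-t:ℕ):ℤ)-j)) * htri
    rw [Finset.sum_congr rfl hterm, ← Finset.mul_sum, gb_key hq (x-t) (r-t) ((k:ℤ)-t)]
    rw [show ((k:ℤ)-t) - ((x-t:ℕ):ℤ) = (k:ℤ)-x from by push_cast [htx]; ring,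
      show ((r-t:ℕ):ℤ) = (r:ℤ)-(t:ℤ) from by push_cast [htr]; ring]
    have hc : q ^ (-(((r-t)*(x-t) : ℕ) : ℤ)) * q ^ ((((r-t)*(x-t) : ℕ)) : ℤ) = 1 := by
      rw [← zpow_add₀ (q_ne hq), show (-(((r-t)*(x-t) : ℕ) : ℤ)) + ((((r-t)*(x-t) : ℕ)) : ℤ) = 0 from by ring,
        zpow_zero]
    linear_combination (- gbinom q (x:ℤ) (t:ℤ) * gbinom q ((k:ℤ)-x) ((r:ℤ)-(t:ℤ))) * hc
  · push_neg at htx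
    rw [gb_nat_lt x t htx, zero_mul]
    symm
    apply Finset.sum_eq_zero
    intro i hi
    have hxi : x < i := lt_of_lt_of_le htx (Finset.mem_Icc.1 hi).1
    rw [gb_nat_lt x i hxi]
    ring
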